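/- If two distinct letters a and b occur in a double occurrence word in the Reidemeister II pattern u·a·b·v·b·a·w and a, b are assigned opposite signs in {+1, -1}, then deleting both occurrences of a and b does not change the odd writhe of the word, i.e., the sum of signs over letters of odd Gaussian parity is the same before and after deletion. -/

import Mathlib

/-- The list of positions at which the letter `c` occurs in the word `w`. -/
def occs {α : Type*} [DecidableEq α] (w : List α) (c : α) : List ℕ :=
  (List.range w.length).filter (fun i => w[i]? = some c)

/-- The Gaussian parity of the letter `c` in a double occurrence word `w`:
if `c` occurs at positions `i < j`, it is `(j - i - 1) % 2`. -/
def gaussParity {α : Type*} [DecidableEq α] (w : List α) (c : α) : ℕ :=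
  match occs w c with
  | [i, j] => (j - i - 1) % 2
  | _ => 0

/-- The number of occurrences of `b` strictly between the two occurrences of `c`. -/
def betweenCount {α : Type*} [DecidableEq α] (w : List α) (c b : α) : ℕ :=
  match occs w c with
  | [i, j] => ((occs w b).filter (fun k => i < k ∧ k < j)).length
  | _ => 0

/-- `b` is interleaved with `c` if exactly one occurrence of `b` lies strictly
between the two occurrences of `c`. -/
def Interleaved {α : Type*} [DecidableEq α] (w : List α) (b c : α) : Prop :=
  betweenCount w c b = 1

instance {α : Type*} [DecidableEq α] (w : List α) (b c : α) :
    Decidable (Interleaved w b c) := by unfold Interleaved; infer_instance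

/-- A double occurrence word: every occurring letter occurs exactly twice. -/
def IsDOW {α : Type*} [DecidableEq α] (w : List α) : Prop :=
  ∀ c ∈ w, w.count c = 2

/-- The odd writhe of a signed double occurrence word: the sum of the signs of
the letters of odd Gaussian parity. -/
def oddWrithe {α : Type*} [DecidableEq α] (w : List α) (sign : α → ℤ) : ℤ :=
  ((w.dedup.filter (fun c => gaussParity w c = 1)).map sign).sum


section Aux
variable {α : Type*} [DecidableEq α]

lemma occs_append (s t : List α) (c : α) :
    occs (s ++ t) c = occs s c ++ (occs t c).map (s.length + ·) := by
  unfold occs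
  rw [List.length_append, List.range_add, List.filter_append, List.filter_map]
  congr 1
  · apply List.filter_congr
    intro i hi
    rw [List.mem_range] at hi
    rw [List.getElem?_append_left hi]
  · congr 1
    apply List.filter_congr
    intro i hi
    simp only [Function.comp]
    rw [List.getElem?_append_right (Nat.le_add_right _ _), Nat.add_sub_cancel_left]

lemma occs_singleton (d c : α) : occs [d] c = if d = c then [0] else [] := by
  unfold occs
  by_cases h : d = c <;> simp [h, List.range_succ]

lemma occs_cons (d : α) (t : List α) (c : α) :
    occs (d :: t) c = (if d = c then [0] else []) ++ (occs t c).map (1 + ·) := by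
  rw [show d :: t = [d] ++ t from rfl, occs_append, occs_singleton]
  rfl

lemma occs_nil (c : α) : occs ([] : List α) c = [] := rfl

lemma length_occs (w : List α) (c : α) : (occs w c).length = w.count c := by
  induction w with
  | nil => rfl
  | cons d t ih =>
    rw [occs_cons, List.count_cons]
    by_cases h : d = c <;> simp [h, ih, beq_iff_eq]

lemma occs_lt {w : List α} {c : α} {k : ℕ} (h : k ∈ occs w c) : k < w.length := by
  unfold occs at h
  simp only [List.mem_filter, List.mem_range] at h
  exact h.1

lemma gaussParity_eq {w : List α} {c : α} {i j : ℕ} (h : occs w c = [i, j]) :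
    gaussParity w c = (j - i - 1) % 2 := by
  unfold gaussParity
  rw [h]

lemma oddWrithe_eq_sum (w : List α) (sign : α → ℤ) :
    oddWrithe w sign = ∑ c ∈ w.toFinset, if gaussParity w c = 1 then sign c else 0 := by
  unfold oddWrithe
  have h1 : (w.dedup.filter (fun c => gaussParity w c = 1)).Nodup :=
    w.nodup_dedup.filter _
  rw [← List.sum_toFinset _ h1]
  have h2 : (w.dedup.filter (fun c => gaussParity w c = 1)).toFinset
      = w.toFinset.filter (fun c => gaussParity w c = 1) := by
    ext c
    simp [List.mem_filter]
  rw [h2, Finset.sum_filter]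

lemma occs_big (u v x : List α) {a b c : α} (hca : a ≠ c) (hcb : b ≠ c) :
    occs (u ++ a :: b :: v ++ b :: a :: x) c
      = occs u c ++ (occs v c).map (fun k => u.length + 2 + k)
        ++ (occs x c).map (fun k => u.length + v.length + 4 + k) := by
  simp only [occs_append, occs_cons, if_neg hca, if_neg hcb, List.map_map,
    List.map_append, List.nil_append, List.append_assoc]
  congr 1
  congr 1
  · refine List.map_congr_left fun k _ => ?_
    simp only [Function.comp_apply]; omega
  · refine List.map_congr_left fun k _ => ?_
    simp only [Function.comp_apply, List.length_cons]; omega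

lemma occs_small (u v x : List α) (c : α) :
    occs (u ++ v ++ x) c
      = occs u c ++ (occs v c).map (fun k => u.length + k)
        ++ (occs x c).map (fun k => u.length + v.length + k) := by
  simp only [occs_append, List.map_map, List.map_append, List.append_assoc,
    List.length_append]
  congr 2
  refine List.map_congr_left fun k _ => ?_
  simp only [Function.comp_apply]; omega

lemma parity_ne (u v x : List α) {a b c : α} (hca : a ≠ c) (hcb : b ≠ c)
    (h2 : u.count c + v.count c + x.count c = 2) :
    gaussParity (u ++ a :: b :: v ++ b :: a :: x) c = gaussParity (u ++ v ++ x) c := by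
  have eW := occs_big u v x hca hcb
  have eW' := occs_small u v x c
  have hlen : (occs u c).length + (occs v c).length + (occs x c).length = 2 := by
    rw [length_occs, length_occs, length_occs]; exact h2
  have hbu : ∀ k ∈ occs u c, k < u.length := fun k hk => occs_lt hk
  have hbv : ∀ k ∈ occs v c, k < v.length := fun k hk => occs_lt hk
  rcases e1 : occs u c with _ | ⟨i, _ | ⟨i', _ | ⟨i'', tl1⟩⟩⟩ <;>
    rcases e2 : occs v c with _ | ⟨j, _ | ⟨j', _ | ⟨j'', tl2⟩⟩⟩ <;>
    rcases e3 : occs x c with _ | ⟨k, _ | ⟨k', _ | ⟨k'', tl3⟩⟩⟩ <;>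
    rw [e1, e2, e3] at eW eW' hlen <;>
    simp only [List.length_nil, List.length_cons] at hlen <;>
    try omega
  all_goals rw [e1] at hbu
  all_goals rw [e2] at hbv
  all_goals try simp at hbu
  all_goals try simp at hbv
  all_goals simp only [List.map_cons, List.map_nil, List.nil_append,
    List.append_nil, List.cons_append] at eW eW'
  all_goals rw [gaussParity_eq eW, gaussParity_eq eW']
  all_goals omega

lemma count_big (u v x : List α) (a b c : α) :
    (u ++ a :: b :: v ++ b :: a :: x).count c
      = u.count c + v.count c + x.count c
        + (if c = a then 2 else 0) + (if c = b then 2 else 0) := by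
  simp only [List.count_append, List.count_cons]
  rcases eq_or_ne c a with rfl | h1 <;> rcases eq_or_ne c b with rfl | h2
  · simp; omega
  · simp [h2, Ne.symm h2]; omega
  · simp [h1, Ne.symm h1]; omega
  · simp [h1, h2, Ne.symm h1, Ne.symm h2]


end Aux

/-- Deleting the two letters of a Reidemeister II pattern u·a·b·v·b·a·w with
opposite signs preserves the odd writhe. -/
theorem reidemeisterII_oddWrithe_invariant {α : Type*} [DecidableEq α]
    (u v x : List α) (a b : α) (sign : α → ℤ) (hab : a ≠ b)
    (hsgn : ∀ c, sign c = 1 ∨ sign c = -1) (hopp : sign a = -sign b)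
    (hw : IsDOW (u ++ a :: b :: v ++ b :: a :: x)) :
    oddWrithe (u ++ a :: b :: v ++ b :: a :: x) sign =
      oddWrithe (u ++ v ++ x) sign := by
  have ha2 := hw a (by simp)
  have hb2 := hw b (by simp)
  rw [count_big] at ha2 hb2
  rw [if_pos rfl, if_neg hab] at ha2
  rw [if_neg (Ne.symm hab), if_pos rfl] at hb2
  have hua : u.count a = 0 := by omega
  have hva : v.count a = 0 := by omega
  have hxa : x.count a = 0 := by omega
  have hub : u.count b = 0 := by omega
  have hvb : v.count b = 0 := by omega
  have hxb : x.count b = 0 := by omega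
  have hu0 : occs u a = [] := List.length_eq_zero_iff.mp (by rw [length_occs]; exact hua)
  have hv0 : occs v a = [] := List.length_eq_zero_iff.mp (by rw [length_occs]; exact hva)
  have hx0 : occs x a = [] := List.length_eq_zero_iff.mp (by rw [length_occs]; exact hxa)
  have hu0' : occs u b = [] := List.length_eq_zero_iff.mp (by rw [length_occs]; exact hub)
  have hv0' : occs v b = [] := List.length_eq_zero_iff.mp (by rw [length_occs]; exact hvb)
  have hx0' : occs x b = [] := List.length_eq_zero_iff.mp (by rw [length_occs]; exact hxb)
  have ea : occs (u ++ a :: b :: v ++ b :: a :: x) a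
      = [u.length, u.length + v.length + 3] := by
    simp [occs_append, occs_cons, hu0, hv0, hx0, Ne.symm hab]
    omega
  have eb : occs (u ++ a :: b :: v ++ b :: a :: x) b
      = [u.length + 1, u.length + v.length + 2] := by
    simp [occs_append, occs_cons, hu0', hv0', hx0', hab]
    omega
  have hpa : gaussParity (u ++ a :: b :: v ++ b :: a :: x) a = v.length % 2 := by
    rw [gaussParity_eq ea]; omega
  have hpb : gaussParity (u ++ a :: b :: v ++ b :: a :: x) b = v.length % 2 := by
    rw [gaussParity_eq eb]; omega
  have hnaL : a ∉ (u ++ v ++ x) := by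
    simp only [List.mem_append, not_or]
    exact ⟨⟨(List.count_eq_zero).mp hua, (List.count_eq_zero).mp hva⟩,
      (List.count_eq_zero).mp hxa⟩
  have hnbL : b ∉ (u ++ v ++ x) := by
    simp only [List.mem_append, not_or]
    exact ⟨⟨(List.count_eq_zero).mp hub, (List.count_eq_zero).mp hvb⟩,
      (List.count_eq_zero).mp hxb⟩
  have hT : (u ++ a :: b :: v ++ b :: a :: x).toFinset
      = insert a (insert b (u ++ v ++ x).toFinset) := by
    ext c
    simp only [List.mem_toFinset, Finset.mem_insert, List.mem_append, List.mem_cons]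
    tauto
  rw [oddWrithe_eq_sum, oddWrithe_eq_sum, hT, Finset.sum_insert
      (by simp only [Finset.mem_insert, List.mem_toFinset]; push_neg; exact ⟨hab, hnaL⟩),
    Finset.sum_insert (by simpa using hnbL)]
  have hsum : ∑ c ∈ (u ++ v ++ x).toFinset,
        (if gaussParity (u ++ a :: b :: v ++ b :: a :: x) c = 1 then sign c else 0)
      = ∑ c ∈ (u ++ v ++ x).toFinset,
        (if gaussParity (u ++ v ++ x) c = 1 then sign c else 0) := by
    refine Finset.sum_congr rfl fun c hc => ?_
    rw [List.mem_toFinset] at hc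
    have hca : a ≠ c := fun h => hnaL (h ▸ hc)
    have hcb : b ≠ c := fun h => hnbL (h ▸ hc)
    have hcW : c ∈ u ++ a :: b :: v ++ b :: a :: x := by
      simp only [List.mem_append, List.mem_cons] at hc ⊢; tauto
    have h2 := hw c hcW
    rw [count_big, if_neg (Ne.symm hca), if_neg (Ne.symm hcb)] at h2
    rw [parity_ne u v x hca hcb (by omega)]
  rw [hsum, hpa, hpb]
  by_cases hp : v.length % 2 = 1
  · rw [if_pos hp, if_pos hp, hopp]; ring
  · rw [if_neg hp, if_neg hp]; ring
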